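/- Let A be an orthogonal array OA(2, k, k) over {1, …, k}. Define a code over Z_2^{(k−1)k} × Z_{k+1} whose codewords are: (i) for each 0 ≤ i ≤ k−2, the binary indicator of {ik+1, …, ik+k}; and (ii) for each row (j_1, …, j_k) of A, the word with ones in positions j_1, k+j_2, …, (k−2)k + j_{k−1} and symbol j_k in the final Z_{k+1}-coordinate. Then this code is a mixed Steiner system MS(2, k, Z_2^{(k−1)k} × Z_{k+1}): every weight-2 word is covered by exactly one codeword, and the minimum Hamming distance is at least 2(k−2)+1. -/

import Mathlib

open Finset
namespace Stmt8Aux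

variable {k : ℕ}

lemma divk (hk : 0 < k) {i j : ℕ} (hj : j < k) : (i * k + j) / k = i := by
  rw [Nat.add_comm, Nat.add_mul_div_right _ _ hk, Nat.div_eq_of_lt hj, Nat.zero_add]

lemma modk (hk : 0 < k) {i j : ℕ} (hj : j < k) : (i * k + j) % k = j := by
  rw [Nat.add_comm, Nat.add_mul_mod_self_right, Nat.mod_eq_of_lt hj]

lemma div_lt (hk : 0 < k) (p : Fin ((k - 1) * k)) : (p : ℕ) / k < k - 1 :=
  Nat.div_lt_of_lt_mul (Nat.mul_comm (k - 1) k ▸ p.isLt)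

lemma val_eq (p : Fin ((k - 1) * k)) : (p : ℕ) = (p : ℕ) / k * k + (p : ℕ) % k :=
  (Nat.div_add_mod' _ _).symm

lemma pos_lt (hk : 0 < k) {i j : ℕ} (hi : i < k - 1) (hj : j < k) : i * k + j < (k - 1) * k := by
  have : i * k + j < (i + 1) * k := by nlinarith
  have : (i + 1) * k ≤ (k - 1) * k := Nat.mul_le_mul_right _ (by omega)
  omega

/-- The block finset. -/
def Blk (k : ℕ) (i : ℕ) : Finset (Fin ((k - 1) * k)) :=
  univ.filter fun p => (p : ℕ) / k = i

/-- The row-type support. -/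
def Row (k : ℕ) (f : ℕ → ℕ) : Finset (Fin ((k - 1) * k)) :=
  univ.filter fun p => (p : ℕ) % k = f ((p : ℕ) / k)

lemma mem_Blk {i : ℕ} {p : Fin ((k - 1) * k)} : p ∈ Blk k i ↔ (p : ℕ) / k = i := by
  simp [Blk]

lemma mem_Row {f : ℕ → ℕ} {p : Fin ((k - 1) * k)} :
    p ∈ Row k f ↔ (p : ℕ) % k = f ((p : ℕ) / k) := by simp [Row]

lemma exists_iff_Row (hk : 0 < k) (f : ℕ → ℕ) (hf : ∀ i, i < k - 1 → f i < k)
    (p : Fin ((k - 1) * k)) :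
    (∃ i : Fin (k - 1), (p : ℕ) = (i : ℕ) * k + f i) ↔ (p : ℕ) % k = f ((p : ℕ) / k) := by
  constructor
  · rintro ⟨i, hi⟩
    rw [hi, divk hk (hf _ i.isLt), modk hk (hf _ i.isLt)]
  · intro h
    exact ⟨⟨(p : ℕ) / k, div_lt hk p⟩, by rw [← h]; exact val_eq p⟩

lemma card_Blk (hk : 0 < k) {i : ℕ} (hi : i < k - 1) : (Blk k i).card = k := by
  have : Blk k i = image (fun j : Fin k => (⟨i * k + j, pos_lt hk hi j.isLt⟩ : Fin ((k - 1) * k))) univ := by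
    ext p
    simp only [mem_Blk, mem_image, mem_univ, true_and]
    constructor
    · intro h
      exact ⟨⟨(p : ℕ) % k, Nat.mod_lt _ hk⟩, by
        apply Fin.ext
        simp only [← h]
        exact (val_eq p).symm⟩
    · rintro ⟨j, rfl⟩
      exact divk hk j.isLt
  rw [this, card_image_of_injective _ (fun a b hab => by
    have := congrArg Fin.val hab
    simp only at this
    exact Fin.ext (by omega)), card_univ, Fintype.card_fin]

lemma card_Row (hk : 0 < k) (f : ℕ → ℕ) (hf : ∀ i, i < k - 1 → f i < k) :
    (Row k f).card = k - 1 := by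
  have : Row k f = image (fun i : Fin (k - 1) =>
      (⟨(i : ℕ) * k + f i, pos_lt hk i.isLt (hf _ i.isLt)⟩ : Fin ((k - 1) * k))) univ := by
    ext p
    simp only [mem_Row, mem_image, mem_univ, true_and]
    rw [← exists_iff_Row hk f hf]
    constructor
    · rintro ⟨i, hi⟩; exact ⟨i, Fin.ext hi.symm⟩
    · rintro ⟨i, rfl⟩; exact ⟨i, rfl⟩
  rw [this, card_image_of_injective _ (fun a b hab => by
    have h1 := congrArg (fun q : Fin ((k-1)*k) => (q : ℕ) / k) hab
    simp only [divk hk (hf _ a.isLt), divk hk (hf _ b.isLt)] at h1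
    exact Fin.ext h1), card_univ, Fintype.card_fin]

lemma Blk_inter_Blk {i i' : ℕ} (h : i ≠ i') : Blk k i ∩ Blk k i' = ∅ := by
  ext p
  simp only [mem_inter, mem_Blk, notMem_empty, iff_false]
  rintro ⟨h1, h2⟩
  exact h (h1 ▸ h2.symm ▸ rfl)

lemma Blk_inter_Row (hk : 0 < k) {i : ℕ} (hi : i < k - 1) (f : ℕ → ℕ)
    (hf : ∀ i, i < k - 1 → f i < k) :
    Blk k i ∩ Row k f = {⟨i * k + f i, pos_lt hk hi (hf _ hi)⟩} := by
  ext p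
  simp only [mem_inter, mem_Blk, mem_Row, mem_singleton]
  constructor
  · rintro ⟨h1, h2⟩
    apply Fin.ext
    rw [val_eq p, h2, h1]
  · rintro rfl
    exact ⟨divk hk (hf _ hi), by rw [divk hk (hf _ hi), modk hk (hf _ hi)]⟩

lemma card_Row_inter_Row (hk : 0 < k) (f g : ℕ → ℕ) (hf : ∀ i, i < k - 1 → f i < k) :
    (Row k f ∩ Row k g).card = ((range (k - 1)).filter fun i => f i = g i).card := by
  refine card_bij (fun p _ => (p : ℕ) / k) ?_ ?_ ?_
  · intro p hp
    simp only [mem_inter, mem_Row] at hp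
    simp only [mem_filter, mem_range]
    exact ⟨div_lt hk p, by omega⟩
  · intro p hp q hq h
    simp only [mem_inter, mem_Row] at hp hq
    apply Fin.ext
    rw [val_eq p, val_eq q, h, hp.1, hq.1, h]
  · intro i hi
    simp only [mem_filter, mem_range] at hi
    refine ⟨⟨i * k + f i, pos_lt hk hi.1 (hf _ hi.1)⟩, ?_, divk hk (hf _ hi.1)⟩
    simp only [mem_inter, mem_Row, divk hk (hf _ hi.1), modk hk (hf _ hi.1)]
    exact ⟨trivial, hi.2⟩

lemma zmod_natCast_inj {n a b : ℕ} (ha : a < n) (hb : b < n) :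
    ((a : ZMod n) = b) ↔ a = b := by
  constructor
  · intro h
    rw [← ZMod.val_cast_of_lt ha, ← ZMod.val_cast_of_lt hb, h]
  · rintro rfl; rfl

lemma zmod_ne_zero {n a : ℕ} (h0 : a ≠ 0) (ha : a < n) : (a : ZMod n) ≠ 0 := by
  intro h
  rw [show ((0 : ZMod n)) = ((0 : ℕ) : ZMod n) by norm_cast] at h
  exact h0 ((zmod_natCast_inj ha (by omega)).mp h)

lemma zmod_exists {n : ℕ} (s : ZMod (n + 1)) (hs : s ≠ 0) :
    ∃ a : ℕ, a < n ∧ ((a + 1 : ℕ) : ZMod (n + 1)) = s := by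
  have h1 : s.val < n + 1 := s.val_lt
  have h2 : s.val ≠ 0 := fun h => hs ((ZMod.val_eq_zero s).mp h)
  refine ⟨s.val - 1, by omega, ?_⟩
  rw [show s.val - 1 + 1 = s.val by omega]
  exact ZMod.natCast_rightInverse s

lemma norm_card' {n : ℕ} (x : Fin n → ZMod 2) (S : Finset (Fin n))
    (hx : ∀ p, x p ≠ 0 ↔ p ∈ S) : hammingNorm x = S.card := by
  unfold hammingNorm
  congr 1
  ext p
  simp [hx]

lemma dist_card' {n : ℕ} (x y : Fin n → ZMod 2) (S T : Finset (Fin n))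
    (hx : ∀ p, x p ≠ 0 ↔ p ∈ S) (hy : ∀ p, y p ≠ 0 ↔ p ∈ T) :
    hammingDist x y = (S \ T).card + (T \ S).card := by
  unfold hammingDist
  rw [← card_union_of_disjoint disjoint_sdiff_sdiff]
  congr 1
  ext p
  have h2 : ∀ a b : ZMod 2, a ≠ b ↔ ¬(a ≠ 0 ↔ b ≠ 0) := by decide
  simp only [mem_union, mem_sdiff, Finset.mem_filter, mem_univ, true_and]
  rw [h2, hx, hy]
  tauto
end Stmt8Aux

open Finset Stmt8Aux in
/-- Let `A` be an `OA(2, k, k)` (symbols taken as `Fin k`, i.e. `0, …, k-1`, in place of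
`1, …, k`). The code over `Z₂^{(k-1)k} × Z_{k+1}` whose codewords are: (i) for each
`i ≤ k - 2` the indicator of the positions `{ik, …, ik + k - 1}` (0-based), and (ii) for
each row `(j₀, …, j_{k-1})` of `A` the word with ones in positions `j₀, k + j₁, …,
(k-2)k + j_{k-2}` and nonzero symbol `j_{k-1} + 1` in the final `Z_{k+1}`-coordinate,
is a mixed Steiner system `MS(2, k, Z₂^{(k-1)k} × Z_{k+1})`: all codewords have weight
`k`, every weight-2 word is covered by exactly one codeword, and the minimum Hamming
distance is at least `2(k-2)+1`. -/
theorem stmt8 (k : ℕ) (hk : 2 ≤ k) (A : Fin (k ^ 2) → Fin k → Fin k)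
    (hA : ∀ j₁ j₂ : Fin k, j₁ ≠ j₂ → ∀ a b : Fin k, ∃! r, A r j₁ = a ∧ A r j₂ = b) :
    ∀ C : Set ((Fin ((k - 1) * k) → ZMod 2) × ZMod (k + 1)),
      C = { w | (∃ i : Fin (k - 1),
              w = (fun p : Fin ((k - 1) * k) => if (p : ℕ) / k = (i : ℕ) then 1 else 0, 0)) ∨
            (∃ r : Fin (k ^ 2),
              w = (fun p : Fin ((k - 1) * k) => if ∃ i : Fin (k - 1),
                      (p : ℕ) = (i : ℕ) * k + (A r (Fin.castLE (Nat.sub_le k 1) i) : ℕ)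
                    then 1 else 0,
                  ((A r ⟨k - 1, by omega⟩ : ℕ) + 1 : ZMod (k + 1)))) } →
      (∀ c ∈ C, hammingNorm c.1 + (if c.2 = 0 then 0 else 1) = k) ∧
      (∀ x : (Fin ((k - 1) * k) → ZMod 2) × ZMod (k + 1),
        hammingNorm x.1 + (if x.2 = 0 then 0 else 1) = 2 →
        ∃! c, c ∈ C ∧ hammingDist x.1 c.1 + (if x.2 = c.2 then 0 else 1) = k - 2) ∧
      (∀ c₁ ∈ C, ∀ c₂ ∈ C, c₁ ≠ c₂ →
        2 * (k - 2) + 1 ≤ hammingDist c₁.1 c₂.1 + (if c₁.2 = c₂.2 then 0 else 1)) := by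
  intro C hC
  have hk0 : 0 < k := by omega
  have hkk : k - 1 < k := by omega
  subst hC
  set F : Fin (k ^ 2) → ℕ → ℕ := fun r i =>
    if h : i < k - 1 then (A r (Fin.castLE (Nat.sub_le k 1) ⟨i, h⟩) : ℕ) else 0 with hF
  have hFval : ∀ r i (hi : i < k - 1),
      F r i = (A r (Fin.castLE (Nat.sub_le k 1) ⟨i, hi⟩) : ℕ) := by
    intro r i hi
    simp only [hF, dif_pos hi]
  have hFlt : ∀ r, ∀ i, i < k - 1 → F r i < k := by
    intro r i hi
    rw [hFval r i hi]
    exact (A r _).isLt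
  have hB1 : ∀ (i : Fin (k - 1)) (p : Fin ((k - 1) * k)),
      (if (p : ℕ) / k = (i : ℕ) then (1 : ZMod 2) else 0) ≠ 0 ↔ p ∈ Blk k (i : ℕ) := by
    intro i p
    rw [mem_Blk]
    by_cases h : (p : ℕ) / k = (i : ℕ) <;> simp [h]
  have hR1 : ∀ (r : Fin (k ^ 2)) (p : Fin ((k - 1) * k)),
      (if ∃ i : Fin (k - 1),
            (p : ℕ) = (i : ℕ) * k + (A r (Fin.castLE (Nat.sub_le k 1) i) : ℕ)
          then (1 : ZMod 2) else 0) ≠ 0 ↔ p ∈ Row k (F r) := by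
    intro r p
    have he : (∃ i : Fin (k - 1),
        (p : ℕ) = (i : ℕ) * k + (A r (Fin.castLE (Nat.sub_le k 1) i) : ℕ)) ↔ p ∈ Row k (F r) := by
      rw [mem_Row, ← exists_iff_Row hk0 (F r) (hFlt r) p]
      constructor
      · rintro ⟨i, hi⟩
        exact ⟨i, by rw [hFval r i i.isLt, Fin.eta]; exact hi⟩
      · rintro ⟨i, hi⟩
        exact ⟨i, by rw [hFval r i i.isLt, Fin.eta] at hi; exact hi⟩
    rw [← he]
    by_cases h : (∃ i : Fin (k - 1),
        (p : ℕ) = (i : ℕ) * k + (A r (Fin.castLE (Nat.sub_le k 1) i) : ℕ)) <;> simp [h]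
  have hRowMem : ∀ (r : Fin (k ^ 2)) (t : Fin ((k - 1) * k)),
      t ∈ Row k (F r) ↔
        A r (Fin.castLE (Nat.sub_le k 1) ⟨(t : ℕ) / k, div_lt hk0 t⟩)
          = ⟨(t : ℕ) % k, Nat.mod_lt _ hk0⟩ := by
    intro r t
    rw [mem_Row, hFval r _ (div_lt hk0 t)]
    constructor
    · intro h
      apply Fin.ext
      exact h.symm
    · intro h
      exact (congrArg Fin.val h).symm
  have hR2 : ∀ r : Fin (k ^ 2),
      ((A r (⟨k - 1, by omega⟩ : Fin k) : ℕ) : ZMod (k + 1)) + 1 ≠ 0 := by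
    intro r
    rw [show ((A r (⟨k - 1, by omega⟩ : Fin k) : ℕ) : ZMod (k + 1)) + 1
        = (((A r (⟨k - 1, by omega⟩ : Fin k) : ℕ) + 1 : ℕ) : ZMod (k + 1)) by push_cast; ring]
    exact zmod_ne_zero (by omega) (by have := (A r ⟨k - 1, by omega⟩).isLt; omega)
  have hR3 : ∀ r r' : Fin (k ^ 2),
      (((A r (⟨k - 1, by omega⟩ : Fin k) : ℕ) : ZMod (k + 1)) + 1
        = ((A r' (⟨k - 1, by omega⟩ : Fin k) : ℕ) : ZMod (k + 1)) + 1)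
      ↔ A r (⟨k - 1, by omega⟩ : Fin k) = A r' (⟨k - 1, by omega⟩ : Fin k) := by
    intro r r'
    rw [add_left_inj,
      zmod_natCast_inj (by have := (A r ⟨k - 1, by omega⟩).isLt; omega)
        (by have := (A r' ⟨k - 1, by omega⟩).isLt; omega)]
    exact ⟨fun h => Fin.ext h, fun h => congrArg Fin.val h⟩
  have hAg : ∀ {r r' : Fin (k ^ 2)}, r ≠ r' → ∀ j₁ j₂ : Fin k, j₁ ≠ j₂ →
      A r j₁ = A r' j₁ → A r j₂ = A r' j₂ → False := by
    intro r r' hne j₁ j₂ hj h1 h2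
    obtain ⟨r₀, -, hu⟩ := hA j₁ j₂ hj (A r' j₁) (A r' j₂)
    exact hne ((hu r ⟨h1, h2⟩).trans (hu r' ⟨rfl, rfl⟩).symm)
  have hagree1 : ∀ {r r' : Fin (k ^ 2)}, r ≠ r' →
      A r (⟨k - 1, by omega⟩ : Fin k) = A r' (⟨k - 1, by omega⟩ : Fin k) →
      ((range (k - 1)).filter fun i => F r i = F r' i) = ∅ := by
    intro r r' hne hl
    rw [filter_eq_empty_iff]
    intro i hi heq
    rw [mem_range] at hi
    rw [hFval r i hi, hFval r' i hi] at heq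
    exact hAg hne _ _ (by
        intro hcol
        have := congrArg Fin.val hcol
        simp only [Fin.coe_castLE] at this
        omega) (Fin.ext heq) hl
  have hagree2 : ∀ {r r' : Fin (k ^ 2)}, r ≠ r' →
      ((range (k - 1)).filter fun i => F r i = F r' i).card ≤ 1 := by
    intro r r' hne
    rw [card_le_one]
    intro i hi j hj
    rw [mem_filter, mem_range] at hi hj
    obtain ⟨hi1, hi2⟩ := hi
    obtain ⟨hj1, hj2⟩ := hj
    by_contra hij
    rw [hFval r i hi1, hFval r' i hi1] at hi2
    rw [hFval r j hj1, hFval r' j hj1] at hj2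
    exact hAg hne _ _ (by
        intro hcol
        have := congrArg Fin.val hcol
        simp only [Fin.coe_castLE] at this
        exact hij this) (Fin.ext hi2) (Fin.ext hj2)
  refine ⟨?_, ?_, ?_⟩
  · -- weights
    intro c hc
    simp only [Set.mem_setOf_eq] at hc
    obtain ⟨i, rfl⟩ | ⟨r, rfl⟩ := hc
    · dsimp only
      rw [norm_card' _ _ (hB1 i), card_Blk hk0 i.isLt, if_pos rfl]
      omega
    · dsimp only
      rw [norm_card' _ _ (hR1 r), card_Row hk0 (F r) (hFlt r), if_neg (hR2 r)]
      omega
  · -- covering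
    intro x hx
    by_cases hx2 : x.2 = 0
    · rw [if_pos hx2] at hx
      have hn2 : hammingNorm x.1 = 2 := by omega
      obtain ⟨p, q, hpq, hS⟩ := Finset.card_eq_two.mp
        (show (univ.filter fun t => x.1 t ≠ 0).card = 2 from hn2)
      have hxsupp : ∀ t, x.1 t ≠ 0 ↔ t ∈ ({p, q} : Finset (Fin ((k - 1) * k))) := by
        intro t
        rw [show x.1 t ≠ 0 ↔ t ∈ univ.filter fun t => x.1 t ≠ 0 by simp, hS]
      have hP2card : ({p, q} : Finset (Fin ((k - 1) * k))).card = 2 := card_pair hpq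
      by_cases hbq : (p : ℕ) / k = (q : ℕ) / k
      · -- same block
        have hlt0 : (p : ℕ) / k < k - 1 := div_lt hk0 p
        have hsub : ({p, q} : Finset (Fin ((k - 1) * k))) ⊆ Blk k ((p : ℕ) / k) := by
          intro t ht
          rw [mem_insert, mem_singleton] at ht
          rw [mem_Blk]
          rcases ht with rfl | rfl
          · rfl
          · exact hbq.symm
        refine ⟨(fun t : Fin ((k - 1) * k) =>
            if (t : ℕ) / k = ((⟨(p : ℕ) / k, hlt0⟩ : Fin (k - 1)) : ℕ) then 1 else 0, 0),
          ⟨Or.inl ⟨⟨(p : ℕ) / k, hlt0⟩, rfl⟩, ?_⟩, ?_⟩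
        · dsimp only
          rw [dist_card' _ _ _ _ hxsupp (hB1 ⟨(p : ℕ) / k, hlt0⟩), if_pos hx2]
          simp only [Fin.val_mk]
          have e1 : ({p, q} : Finset (Fin ((k - 1) * k))) \ Blk k ((p : ℕ) / k) = ∅ :=
            sdiff_eq_empty_iff_subset.mpr hsub
          have e2 := card_sdiff_add_card_inter (Blk k ((p : ℕ) / k)) ({p, q} : Finset (Fin ((k - 1) * k)))
          rw [inter_comm, inter_eq_left.mpr hsub, hP2card, card_Blk hk0 hlt0] at e2
          rw [e1]
          simp only [card_empty]
          omega
        · rintro c ⟨hcC, hcd⟩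
          simp only [Set.mem_setOf_eq] at hcC
          obtain ⟨i', rfl⟩ | ⟨r, rfl⟩ := hcC
          · dsimp only at hcd ⊢
            by_cases hii : (i' : ℕ) = (p : ℕ) / k
            · have : i' = ⟨(p : ℕ) / k, hlt0⟩ := Fin.ext hii
              rw [this]
            · exfalso
              rw [dist_card' _ _ _ _ hxsupp (hB1 i'), if_pos hx2] at hcd
              have hm : ({p, q} : Finset (Fin ((k - 1) * k))) ∩ Blk k (i' : ℕ) = ∅ := by
                rw [eq_empty_iff_forall_notMem]
                intro t ht
                rw [mem_inter, mem_insert, mem_singleton, mem_Blk] at ht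
                rcases ht.1 with rfl | rfl
                · exact hii (ht.2 ▸ rfl)
                · exact hii (by rw [← ht.2, hbq])
              have e1 := card_sdiff_add_card_inter ({p, q} : Finset (Fin ((k - 1) * k))) (Blk k (i' : ℕ))
              have e2 := card_sdiff_add_card_inter (Blk k (i' : ℕ)) ({p, q} : Finset (Fin ((k - 1) * k)))
              rw [hm, card_empty, hP2card] at e1
              rw [inter_comm, hm, card_empty, card_Blk hk0 i'.isLt] at e2
              omega
          · exfalso
            dsimp only at hcd
            rw [dist_card' _ _ _ _ hxsupp (hR1 r),
              if_neg (fun h : x.2 = _ => hR2 r (by rw [← h, hx2]))] at hcd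
            have hm : (({p, q} : Finset (Fin ((k - 1) * k))) ∩ Row k (F r)).card ≤ 1 := by
              by_contra hgt
              have hsub2 : ({p, q} : Finset (Fin ((k - 1) * k))) ∩ Row k (F r)
                  = ({p, q} : Finset (Fin ((k - 1) * k))) :=
                eq_of_subset_of_card_le inter_subset_left (by omega)
              have hp' : p ∈ Row k (F r) :=
                (mem_inter.mp (hsub2 ▸ (by simp : p ∈ ({p, q} : Finset (Fin ((k - 1) * k)))))).2
              have hq' : q ∈ Row k (F r) :=
                (mem_inter.mp (hsub2 ▸ (by simp : q ∈ ({p, q} : Finset (Fin ((k - 1) * k)))))).2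
              rw [mem_Row] at hp' hq'
              rw [← hbq] at hq'
              exact hpq (Fin.ext (by rw [val_eq p, val_eq q, hbq, hp', hq']))
            have e1 := card_sdiff_add_card_inter ({p, q} : Finset (Fin ((k - 1) * k))) (Row k (F r))
            have e2 := card_sdiff_add_card_inter (Row k (F r)) ({p, q} : Finset (Fin ((k - 1) * k)))
            rw [hP2card] at e1
            rw [inter_comm, card_Row hk0 (F r) (hFlt r)] at e2
            omega
      · -- different blocks
        have hlt1 : (p : ℕ) / k < k - 1 := div_lt hk0 p
        have hlt2 : (q : ℕ) / k < k - 1 := div_lt hk0 q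
        have hcols : Fin.castLE (Nat.sub_le k 1) (⟨(p : ℕ) / k, hlt1⟩ : Fin (k - 1))
            ≠ Fin.castLE (Nat.sub_le k 1) (⟨(q : ℕ) / k, hlt2⟩ : Fin (k - 1)) := by
          intro h
          exact hbq (congrArg Fin.val h)
        obtain ⟨r₀, ⟨hr₀1, hr₀2⟩, hr₀u⟩ := hA _ _ hcols
          ⟨(p : ℕ) % k, Nat.mod_lt _ hk0⟩ ⟨(q : ℕ) % k, Nat.mod_lt _ hk0⟩
        have hpRow : p ∈ Row k (F r₀) := (hRowMem r₀ p).mpr hr₀1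
        have hqRow : q ∈ Row k (F r₀) := (hRowMem r₀ q).mpr hr₀2
        have hsub : ({p, q} : Finset (Fin ((k - 1) * k))) ⊆ Row k (F r₀) := by
          intro t ht
          rw [mem_insert, mem_singleton] at ht
          rcases ht with rfl | rfl
          · exact hpRow
          · exact hqRow
        refine ⟨(fun t : Fin ((k - 1) * k) => if ∃ i : Fin (k - 1),
            (t : ℕ) = (i : ℕ) * k + (A r₀ (Fin.castLE (Nat.sub_le k 1) i) : ℕ) then 1 else 0,
            ((A r₀ (⟨k - 1, by omega⟩ : Fin k) : ℕ) : ZMod (k + 1)) + 1),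
          ⟨Or.inr ⟨r₀, rfl⟩, ?_⟩, ?_⟩
        · dsimp only
          rw [dist_card' _ _ _ _ hxsupp (hR1 r₀),
            if_neg (fun h : x.2 = _ => hR2 r₀ (by rw [← h, hx2]))]
          have e1 : ({p, q} : Finset (Fin ((k - 1) * k))) \ Row k (F r₀) = ∅ :=
            sdiff_eq_empty_iff_subset.mpr hsub
          have e2 := card_sdiff_add_card_inter (Row k (F r₀)) ({p, q} : Finset (Fin ((k - 1) * k)))
          rw [inter_comm, inter_eq_left.mpr hsub, hP2card, card_Row hk0 (F r₀) (hFlt r₀)] at e2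
          rw [e1]
          simp only [card_empty]
          omega
        · rintro c ⟨hcC, hcd⟩
          simp only [Set.mem_setOf_eq] at hcC
          obtain ⟨i', rfl⟩ | ⟨r, rfl⟩ := hcC
          · exfalso
            dsimp only at hcd
            rw [dist_card' _ _ _ _ hxsupp (hB1 i'), if_pos hx2] at hcd
            have hm : (({p, q} : Finset (Fin ((k - 1) * k))) ∩ Blk k (i' : ℕ)).card ≤ 1 := by
              by_contra hgt
              have hsub2 : ({p, q} : Finset (Fin ((k - 1) * k))) ∩ Blk k (i' : ℕ)
                  = ({p, q} : Finset (Fin ((k - 1) * k))) :=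
                eq_of_subset_of_card_le inter_subset_left (by omega)
              have hp' : p ∈ Blk k (i' : ℕ) := by
                have : p ∈ ({p, q} : Finset (Fin ((k - 1) * k))) ∩ Blk k (i' : ℕ) := by
                  rw [hsub2]; simp
                exact (mem_inter.mp this).2
              have hq' : q ∈ Blk k (i' : ℕ) := by
                have : q ∈ ({p, q} : Finset (Fin ((k - 1) * k))) ∩ Blk k (i' : ℕ) := by
                  rw [hsub2]; simp
                exact (mem_inter.mp this).2
              rw [mem_Blk] at hp' hq'
              exact hbq (by rw [hp', hq'])
            have e1 := card_sdiff_add_card_inter ({p, q} : Finset (Fin ((k - 1) * k))) (Blk k (i' : ℕ))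
            have e2 := card_sdiff_add_card_inter (Blk k (i' : ℕ)) ({p, q} : Finset (Fin ((k - 1) * k)))
            rw [hP2card] at e1
            rw [inter_comm, card_Blk hk0 i'.isLt] at e2
            omega
          · dsimp only at hcd ⊢
            rw [dist_card' _ _ _ _ hxsupp (hR1 r),
              if_neg (fun h : x.2 = _ => hR2 r (by rw [← h, hx2]))] at hcd
            have e1 := card_sdiff_add_card_inter ({p, q} : Finset (Fin ((k - 1) * k))) (Row k (F r))
            have e2 := card_sdiff_add_card_inter (Row k (F r)) ({p, q} : Finset (Fin ((k - 1) * k)))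
            rw [hP2card] at e1
            rw [inter_comm, card_Row hk0 (F r) (hFlt r)] at e2
            have hm : (({p, q} : Finset (Fin ((k - 1) * k))) ∩ Row k (F r)).card = 2 := by
              have hk3 : 2 ≤ k - 1 := by omega
              omega
            have hsub2 : ({p, q} : Finset (Fin ((k - 1) * k))) ∩ Row k (F r)
                = ({p, q} : Finset (Fin ((k - 1) * k))) :=
              eq_of_subset_of_card_le inter_subset_left (by omega)
            have hp' : p ∈ Row k (F r) := by
              have : p ∈ ({p, q} : Finset (Fin ((k - 1) * k))) ∩ Row k (F r) := by
                rw [hsub2]; simp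
              exact (mem_inter.mp this).2
            have hq' : q ∈ Row k (F r) := by
              have : q ∈ ({p, q} : Finset (Fin ((k - 1) * k))) ∩ Row k (F r) := by
                rw [hsub2]; simp
              exact (mem_inter.mp this).2
            rw [hRowMem] at hp' hq'
            have : r = r₀ := hr₀u r ⟨hp', hq'⟩
            rw [this]
    · -- x.2 ≠ 0
      rw [if_neg hx2] at hx
      have hn1 : hammingNorm x.1 = 1 := by omega
      obtain ⟨p, hS⟩ := Finset.card_eq_one.mp
        (show (univ.filter fun t => x.1 t ≠ 0).card = 1 from hn1)
      have hxsupp : ∀ t, x.1 t ≠ 0 ↔ t ∈ ({p} : Finset (Fin ((k - 1) * k))) := by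
        intro t
        rw [show x.1 t ≠ 0 ↔ t ∈ univ.filter fun t => x.1 t ≠ 0 by simp, hS]
      obtain ⟨a, ha, has⟩ := by
        have : k = (k - 1) + 1 := by omega
        exact zmod_exists (n := k) x.2 hx2
      have hlt1 : (p : ℕ) / k < k - 1 := div_lt hk0 p
      have hcols : Fin.castLE (Nat.sub_le k 1) (⟨(p : ℕ) / k, hlt1⟩ : Fin (k - 1))
          ≠ (⟨k - 1, by omega⟩ : Fin k) := by
        intro h
        have := congrArg Fin.val h
        simp only [Fin.coe_castLE] at this
        omega
      obtain ⟨r₀, ⟨hr₀1, hr₀2⟩, hr₀u⟩ := hA _ _ hcols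
        ⟨(p : ℕ) % k, Nat.mod_lt _ hk0⟩ ⟨a, ha⟩
      have hpRow : p ∈ Row k (F r₀) := (hRowMem r₀ p).mpr hr₀1
      have hc2 : ((A r₀ (⟨k - 1, by omega⟩ : Fin k) : ℕ) : ZMod (k + 1)) + 1 = x.2 := by
        rw [hr₀2, ← has]
        push_cast
        ring
      refine ⟨(fun t : Fin ((k - 1) * k) => if ∃ i : Fin (k - 1),
          (t : ℕ) = (i : ℕ) * k + (A r₀ (Fin.castLE (Nat.sub_le k 1) i) : ℕ) then 1 else 0,
          ((A r₀ (⟨k - 1, by omega⟩ : Fin k) : ℕ) : ZMod (k + 1)) + 1),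
        ⟨Or.inr ⟨r₀, rfl⟩, ?_⟩, ?_⟩
      · dsimp only
        rw [dist_card' _ _ _ _ hxsupp (hR1 r₀), if_pos hc2.symm]
        have hsub : ({p} : Finset (Fin ((k - 1) * k))) ⊆ Row k (F r₀) := by
          intro t ht
          rw [mem_singleton] at ht
          rw [ht]
          exact hpRow
        have e1 : ({p} : Finset (Fin ((k - 1) * k))) \ Row k (F r₀) = ∅ :=
          sdiff_eq_empty_iff_subset.mpr hsub
        have e2 := card_sdiff_add_card_inter (Row k (F r₀)) ({p} : Finset (Fin ((k - 1) * k)))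
        rw [inter_comm, inter_eq_left.mpr hsub, card_singleton,
          card_Row hk0 (F r₀) (hFlt r₀)] at e2
        rw [e1]
        simp only [card_empty]
        omega
      · rintro c ⟨hcC, hcd⟩
        simp only [Set.mem_setOf_eq] at hcC
        obtain ⟨i', rfl⟩ | ⟨r, rfl⟩ := hcC
        · exfalso
          dsimp only at hcd
          rw [dist_card' _ _ _ _ hxsupp (hB1 i'), if_neg (fun h : x.2 = _ => hx2 h)] at hcd
          have e1 := card_sdiff_add_card_inter ({p} : Finset (Fin ((k - 1) * k))) (Blk k (i' : ℕ))
          have e2 := card_sdiff_add_card_inter (Blk k (i' : ℕ)) ({p} : Finset (Fin ((k - 1) * k)))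
          rw [card_singleton] at e1
          rw [inter_comm, card_Blk hk0 i'.isLt] at e2
          omega
        · dsimp only at hcd ⊢
          by_cases hss : x.2 = ((A r (⟨k - 1, by omega⟩ : Fin k) : ℕ) : ZMod (k + 1)) + 1
          · rw [dist_card' _ _ _ _ hxsupp (hR1 r), if_pos hss] at hcd
            have e1 := card_sdiff_add_card_inter ({p} : Finset (Fin ((k - 1) * k))) (Row k (F r))
            have e2 := card_sdiff_add_card_inter (Row k (F r)) ({p} : Finset (Fin ((k - 1) * k)))
            rw [card_singleton] at e1
            rw [inter_comm, card_Row hk0 (F r) (hFlt r)] at e2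
            have hm : (({p} : Finset (Fin ((k - 1) * k))) ∩ Row k (F r)).card = 1 := by omega
            have hp' : p ∈ Row k (F r) := by
              have hsub2 : ({p} : Finset (Fin ((k - 1) * k))) ∩ Row k (F r)
                  = ({p} : Finset (Fin ((k - 1) * k))) :=
                eq_of_subset_of_card_le inter_subset_left (by rw [card_singleton, hm])
              have : p ∈ ({p} : Finset (Fin ((k - 1) * k))) ∩ Row k (F r) := by
                rw [hsub2]; simp
              exact (mem_inter.mp this).2
            rw [hRowMem] at hp'
            have hlast : A r (⟨k - 1, by omega⟩ : Fin k) = ⟨a, ha⟩ := by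
              have h1 : ((A r (⟨k - 1, by omega⟩ : Fin k) : ℕ) : ZMod (k + 1)) + 1
                  = ((a : ℕ) : ZMod (k + 1)) + 1 := by
                rw [← hss, ← has]
                push_cast
                ring
              rw [add_left_inj,
                zmod_natCast_inj (by have := (A r ⟨k - 1, by omega⟩).isLt; omega) (by omega)] at h1
              exact Fin.ext h1
            have : r = r₀ := hr₀u r ⟨hp', hlast⟩
            rw [this]
          · exfalso
            rw [dist_card' _ _ _ _ hxsupp (hR1 r), if_neg hss] at hcd
            have e1 := card_sdiff_add_card_inter ({p} : Finset (Fin ((k - 1) * k))) (Row k (F r))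
            have e2 := card_sdiff_add_card_inter (Row k (F r)) ({p} : Finset (Fin ((k - 1) * k)))
            rw [card_singleton] at e1
            rw [inter_comm, card_Row hk0 (F r) (hFlt r)] at e2
            omega
  · -- minimum distance
    intro c₁ h₁ c₂ h₂ hne
    simp only [Set.mem_setOf_eq] at h₁ h₂
    obtain ⟨i, rfl⟩ | ⟨r, rfl⟩ := h₁ <;> obtain ⟨i', rfl⟩ | ⟨r', rfl⟩ := h₂ <;> dsimp only
    · have hii : (i : ℕ) ≠ (i' : ℕ) := by
        intro h
        exact hne (by rw [Fin.ext h])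
      rw [dist_card' _ _ _ _ (hB1 i) (hB1 i'), if_pos rfl]
      have hint := Blk_inter_Blk (k := k) hii
      have e1 := card_sdiff_add_card_inter (Blk k (i : ℕ)) (Blk k (i' : ℕ))
      have e2 := card_sdiff_add_card_inter (Blk k (i' : ℕ)) (Blk k (i : ℕ))
      rw [hint, card_empty, card_Blk hk0 i.isLt] at e1
      rw [inter_comm, hint, card_empty, card_Blk hk0 i'.isLt] at e2
      omega
    · rw [dist_card' _ _ _ _ (hB1 i) (hR1 r'), if_neg (fun h : (0 : ZMod (k + 1)) = _ => hR2 r' h.symm)]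
      have hint := Blk_inter_Row hk0 i.isLt (F r') (hFlt r')
      have e1 := card_sdiff_add_card_inter (Blk k (i : ℕ)) (Row k (F r'))
      have e2 := card_sdiff_add_card_inter (Row k (F r')) (Blk k (i : ℕ))
      rw [hint, card_singleton, card_Blk hk0 i.isLt] at e1
      rw [inter_comm, hint, card_singleton, card_Row hk0 (F r') (hFlt r')] at e2
      omega
    · rw [dist_card' _ _ _ _ (hR1 r) (hB1 i'), if_neg (fun h : _ = (0 : ZMod (k + 1)) => hR2 r h)]
      have hint := Blk_inter_Row hk0 i'.isLt (F r) (hFlt r)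
      have e1 := card_sdiff_add_card_inter (Row k (F r)) (Blk k (i' : ℕ))
      have e2 := card_sdiff_add_card_inter (Blk k (i' : ℕ)) (Row k (F r))
      rw [inter_comm, hint, card_singleton, card_Row hk0 (F r) (hFlt r)] at e1
      rw [hint, card_singleton, card_Blk hk0 i'.isLt] at e2
      omega
    · have hrr : r ≠ r' := by
        rintro rfl
        exact hne rfl
      rw [dist_card' _ _ _ _ (hR1 r) (hR1 r')]
      have e1 := card_sdiff_add_card_inter (Row k (F r)) (Row k (F r'))
      have e2 := card_sdiff_add_card_inter (Row k (F r')) (Row k (F r))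
      have hint := card_Row_inter_Row hk0 (F r) (F r') (hFlt r)
      rw [hint, card_Row hk0 (F r) (hFlt r)] at e1
      rw [inter_comm, hint, card_Row hk0 (F r') (hFlt r')] at e2
      by_cases hl : A r (⟨k - 1, by omega⟩ : Fin k) = A r' (⟨k - 1, by omega⟩ : Fin k)
      · rw [if_pos ((hR3 r r').mpr hl)]
        rw [hagree1 hrr hl, card_empty] at e1 e2
        omega
      · rw [if_neg (fun h => hl ((hR3 r r').mp h))]
        have ht := hagree2 hrr
        omega
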